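/- For 1 ≤ k ≤ ⌊n/2⌋ and 0 ≤ r ≤ k−1, the r-th toric h-number of the dual hypersimplex Δ(k,n)* equals ∑_{i=0}^{r} C(n,i); equivalently, the r-th entry of the usual h-vector computed from face numbers f_j = 2^{j+1} C(n,j+1) for 0 ≤ j ≤ n−2 (with f_{-1} = 1) via h_r = ∑_{j=0}^{r} (−1)^{r−j} C(n−1−j, r−j) f_{j-1} equals ∑_{i=0}^{r} C(n,i). -/

import Mathlib

open Finset

lemma lemT (a s : ℕ) :
    ∑ m ∈ Finset.range (s + 1),
      (-1 : ℤ) ^ (s - m) * ((a + s - m).choose (s - m)) * ((a + s).choose m)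
    = if s = 0 then 1 else 0 := by
  have h1 : ∀ m ∈ Finset.range (s + 1),
      (-1 : ℤ) ^ (s - m) * ((a + s - m).choose (s - m)) * ((a + s).choose m)
      = ((a + s).choose a : ℤ) * ((-1 : ℤ) ^ s * ((-1 : ℤ) ^ m * (s.choose m : ℤ))) := by
    intro m hm
    rw [Finset.mem_range] at hm
    have hms : m ≤ s := by omega
    have hsymm : ((a + s - m).choose (s - m)) = (a + s - m).choose a := by
      apply Nat.choose_symm_of_eq_add; omega
    have htri : (a + s).choose m * (a + s - m).choose a = (a + s).choose a * s.choose m := by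
      have h := Nat.choose_mul (n := a + s) (k := m + a) (s := a) (by omega)
      have h' := Nat.choose_mul (n := a + s) (k := m + a) (s := m) (by omega)
      have e1 : (m + a) - a = m := by omega
      have e2 : (m + a) - m = a := by omega
      have e3 : (a + s) - a = s := by omega
      rw [e1, e3] at h
      rw [e2] at h'
      have hsym2 : (m + a).choose a = (m + a).choose m := by
        apply Nat.choose_symm_of_eq_add; omega
      rw [hsym2] at h
      omega
    have htriZ : ((a + s).choose m : ℤ) * ((a + s - m).choose a : ℤ)
        = ((a + s).choose a : ℤ) * (s.choose m : ℤ) := by exact_mod_cast htri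
    have hsign : (-1 : ℤ) ^ (s - m) = (-1 : ℤ) ^ s * (-1 : ℤ) ^ m := by
      have h2 : (-1 : ℤ) ^ (s - m) = (-1 : ℤ) ^ (s + m) := by
        rw [show s + m = (s - m) + 2 * m by omega, pow_add, pow_mul]; norm_num
      rw [h2, pow_add]
    rw [hsymm, hsign]
    linear_combination ((-1 : ℤ) ^ s * (-1 : ℤ) ^ m) * htriZ
  rw [Finset.sum_congr rfl h1, ← Finset.mul_sum, ← Finset.mul_sum,
    Int.alternating_sum_range_choose]
  split_ifs with h
  · subst h; simp
  · simp

lemma lemS (a s : ℕ) :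
    ∑ m ∈ Finset.range (s + 1),
      (-1 : ℤ) ^ (s - m) * ((a + s - m).choose (s - m)) * ((a + s + 1).choose m)
    = 1 := by
  induction s with
  | zero => simp
  | succ s ih =>
    have hT := lemT a (s + 1)
    rw [if_neg (by omega)] at hT
    simp only [show a + (s + 1) = a + s + 1 by omega] at hT ⊢
    rw [Finset.sum_range_succ'] at hT ⊢
    have eidx : ∀ m ∈ Finset.range (s + 1),
        (-1 : ℤ) ^ (s + 1 - (m + 1)) * ((a + s + 1 - (m + 1)).choose (s + 1 - (m + 1)))
          * ((a + s + 1).choose (m + 1))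
        = (-1 : ℤ) ^ (s - m) * ((a + s - m).choose (s - m)) * ((a + s + 1).choose (m + 1)) := by
      intro m hm
      rw [Finset.mem_range] at hm
      have e1 : s + 1 - (m + 1) = s - m := by omega
      have e2 : a + s + 1 - (m + 1) = a + s - m := by omega
      rw [e1, e2]
    rw [Finset.sum_congr rfl eidx] at hT
    have hsplit : ∀ m ∈ Finset.range (s + 1),
        (-1 : ℤ) ^ (s + 1 - (m + 1)) * ((a + s + 1 - (m + 1)).choose (s + 1 - (m + 1)))
          * ((a + s + 1 + 1).choose (m + 1))
        = (-1 : ℤ) ^ (s - m) * ((a + s - m).choose (s - m)) * ((a + s + 1).choose m)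
          + (-1 : ℤ) ^ (s - m) * ((a + s - m).choose (s - m)) * ((a + s + 1).choose (m + 1)) := by
      intro m hm
      rw [Finset.mem_range] at hm
      have e1 : s + 1 - (m + 1) = s - m := by omega
      have e2 : a + s + 1 - (m + 1) = a + s - m := by omega
      rw [e1, e2, Nat.choose_succ_succ']
      push_cast
      ring
    rw [Finset.sum_congr rfl hsplit, Finset.sum_add_distrib, ih]
    simp only [Nat.sub_zero, Nat.choose_zero_right, Nat.cast_one, mul_one] at hT ⊢
    linarith [hT]


/-- For `1 ≤ k ≤ ⌊n/2⌋` and `0 ≤ r ≤ k−1`, the `r`-th toric h-number of the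
dual hypersimplex `Δ(k,n)*`, computed from the face numbers
`f_{j-1} = 2^j·C(n,j)` via `h_r = ∑_{j=0}^{r} (−1)^{r−j} C(n−1−j, r−j) f_{j-1}`,
equals `∑_{i=0}^{r} C(n,i)`. -/
theorem stmt15 (n k r : ℕ) (hk1 : 1 ≤ k) (hk2 : k ≤ n / 2) (hr : r ≤ k - 1) :
    ∑ j ∈ Finset.range (r + 1),
        (-1 : ℤ) ^ (r - j) * ((n - 1 - j).choose (r - j)) * (2 ^ j * n.choose j)
      = ∑ i ∈ Finset.range (r + 1), (n.choose i : ℤ) := by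
  have hn : 2 * r + 2 ≤ n := by omega
  have step1 : ∀ j ∈ Finset.range (r + 1),
      (-1 : ℤ) ^ (r - j) * ((n - 1 - j).choose (r - j)) * (2 ^ j * n.choose j)
      = ∑ i ∈ Finset.range (r + 1),
          (-1 : ℤ) ^ (r - j) * ((n - 1 - j).choose (r - j))
            * ((n.choose j : ℤ) * (j.choose i : ℤ)) := by
    intro j hj
    rw [Finset.mem_range] at hj
    rw [← Finset.mul_sum, ← Finset.mul_sum]
    have hext : ∑ i ∈ Finset.range (j + 1), (j.choose i : ℤ)
        = ∑ i ∈ Finset.range (r + 1), (j.choose i : ℤ) := by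
      apply Finset.sum_subset
      · intro x hx
        rw [Finset.mem_range] at hx ⊢; omega
      · intro x _ hx
        rw [Finset.mem_range, not_lt] at hx
        rw [Nat.choose_eq_zero_of_lt (by omega)]; simp
    have h2 : ∑ i ∈ Finset.range (j + 1), (j.choose i : ℤ) = 2 ^ j := by
      exact_mod_cast congrArg (Nat.cast : ℕ → ℤ) (Nat.sum_range_choose j)
    rw [← hext, h2]
    ring
  rw [Finset.sum_congr rfl step1, Finset.sum_comm]
  refine Finset.sum_congr rfl ?_
  intro i hi
  rw [Finset.mem_range] at hi
  have hsub : ∑ j ∈ Finset.range (r + 1),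
      (-1 : ℤ) ^ (r - j) * ((n - 1 - j).choose (r - j))
        * ((n.choose j : ℤ) * (j.choose i : ℤ))
      = ∑ j ∈ Finset.Ico i (r + 1),
      (-1 : ℤ) ^ (r - j) * ((n - 1 - j).choose (r - j))
        * ((n.choose j : ℤ) * (j.choose i : ℤ)) := by
    symm
    apply Finset.sum_subset
    · intro x hx
      rw [Finset.mem_Ico] at hx
      rw [Finset.mem_range]; omega
    · intro x hx hx'
      rw [Finset.mem_range] at hx
      rw [Finset.mem_Ico, not_and_or, not_le] at hx'
      have hxi : x < i := by omega
      rw [Nat.choose_eq_zero_of_lt hxi]; simp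
  rw [hsub, Finset.sum_Ico_eq_sum_range]
  have e : r + 1 - i = (r - i) + 1 := by omega
  rw [e]
  have step2 : ∀ m ∈ Finset.range ((r - i) + 1),
      (-1 : ℤ) ^ (r - (i + m)) * ((n - 1 - (i + m)).choose (r - (i + m)))
        * ((n.choose (i + m) : ℤ) * ((i + m).choose i : ℤ))
      = (n.choose i : ℤ) * ((-1 : ℤ) ^ ((r - i) - m)
          * (((n - 1 - r) + (r - i) - m).choose ((r - i) - m))
          * (((n - 1 - r) + (r - i) + 1).choose m)) := by
    intro m hm
    rw [Finset.mem_range] at hm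
    have hm' : m ≤ r - i := by omega
    have e1 : r - (i + m) = (r - i) - m := by omega
    have e2 : n - 1 - (i + m) = (n - 1 - r) + (r - i) - m := by omega
    have e3 : (n - 1 - r) + (r - i) + 1 = n - i := by omega
    have hcm := Nat.choose_mul (n := n) (k := i + m) (s := i) (by omega)
    have e4 : (i + m) - i = m := by omega
    rw [e4] at hcm
    have hcmZ : (n.choose (i + m) : ℤ) * ((i + m).choose i : ℤ)
        = (n.choose i : ℤ) * ((n - i).choose m : ℤ) := by exact_mod_cast hcm
    rw [e1, e2, e3, hcmZ]
    ring
  rw [Finset.sum_congr rfl step2, ← Finset.mul_sum, lemS (n - 1 - r) (r - i), mul_one]
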